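/- (Local linear convergence of gradient descent) Let x_⋆ ∈ ℝ^p, let K satisfy the kernel assumption, let δ > 0, let a_1, …, a_n ∈ ℝ^p be fixed vectors, and set b_i = (a_iᵀx_⋆)². Suppose there exist λ_s, ρ, μ_max > 0 such that: (i) F_δ(x) − F_δ(x_⋆) ≥ λ_s·min{Δ(x), Δ(x)²/δ} for all x ∈ ℝ^p; (ii) F_δ(y) − F_δ(x) ≥ ∇F_δ(x)ᵀ(y−x) − (ρ/2)‖y−x‖₂² for all x, y ∈ ℝ^p; and (iii) the operator norm of the Hessian of F_δ is at most μ_max/δ at every point. Let x_{k+1} = x_k − t·∇F_δ(x_k), k = 0, 1, 2, …, with step size t = δ/μ_max. If Δ(x_0) ≤ min{1, √(2λ_s/μ_max)}·δ and 0 < δ ≤ λ_s/ρ, then F_δ(x_{k+1}) − F_δ(x_⋆) ≤ (1 − λ_s/(8μ_max))·(F_δ(x_k) − F_δ(x_⋆)) for every k ∈ ℕ. -/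

import Mathlib

open MeasureTheory ProbabilityTheory
open scoped BigOperators RealInnerProductSpace Gradient

/-- The kernel assumption: `K` is a nonnegative, symmetric kernel integrating to one,
bounded, Lipschitz, positive at zero, and `x ↦ x * K x` is bounded, Lipschitz and
absolutely integrable. -/
structure IsGoodKernel (K : ℝ → ℝ) : Prop where
  nonneg : ∀ x, 0 ≤ K x
  symm : ∀ x, K x = K (-x)
  integral_one : (∫ x, K x) = 1
  bounded : ∃ B, ∀ x, |K x| ≤ B
  lipschitz : ∃ L : NNReal, LipschitzWith L K
  pos_at_zero : 0 < K 0
  bar_bounded : ∃ B, ∀ x, |x * K x| ≤ B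
  bar_lipschitz : ∃ L : NNReal, LipschitzWith L (fun x => x * K x)
  bar_integrable : Integrable (fun x => x * K x)

/-- The scaled kernel `K_δ(x) = (1/δ) K(x/δ)`. -/
noncomputable def scaledKernel (K : ℝ → ℝ) (δ : ℝ) (x : ℝ) : ℝ := (1 / δ) * K (x / δ)

/-- The convolution-type smoothed loss `l_δ(x) = ∫ |y| K_δ(x - y) dy`. -/
noncomputable def smoothedLoss (K : ℝ → ℝ) (δ : ℝ) (x : ℝ) : ℝ :=
  ∫ y, |y| * scaledKernel K δ (x - y)

/-- The smoothed empirical objective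
`F_δ(x) = (1/n) ∑ᵢ l_δ((aᵢᵀ x)² - bᵢ)`. -/
noncomputable def smoothedObj {p n : ℕ} (K : ℝ → ℝ) (δ : ℝ)
    (a : Fin n → EuclideanSpace ℝ (Fin p)) (b : Fin n → ℝ)
    (x : EuclideanSpace ℝ (Fin p)) : ℝ :=
  (n : ℝ)⁻¹ * ∑ i, smoothedLoss K δ ((⟪a i, x⟫) ^ 2 - b i)

/-- `Δ(x) = min(‖x - x⋆‖, ‖x + x⋆‖)`, the distance to the pair of true signals. -/
noncomputable def distSig {p : ℕ} (xs x : EuclideanSpace ℝ (Fin p)) : ℝ :=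
  min ‖x - xs‖ ‖x + xs‖

/-- The standard Gaussian measure `N(0, I_p)` on `EuclideanSpace ℝ (Fin p)`. -/
noncomputable def stdGaussian (p : ℕ) : Measure (EuclideanSpace ℝ (Fin p)) :=
  Measure.map (MeasurableEquiv.toLp 2 (Fin p → ℝ))
    (Measure.pi fun _ => gaussianReal 0 1)

/-- `a` is a family of i.i.d. standard Gaussian random vectors in `ℝ^p`. -/
def IsIIDStdGaussian {Ω : Type*} [MeasurableSpace Ω] (P : Measure Ω) {p : ℕ} {ι : Type*}
    (a : ι → Ω → EuclideanSpace ℝ (Fin p)) : Prop :=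
  (∀ i, Measurable (a i)) ∧
  iIndepFun a P ∧
  (∀ i, Measure.map (a i) P = stdGaussian p)



section SAFAux

open Set

variable {K : ℝ → ℝ} {δ : ℝ}

lemma SAF_K_integrable (hK : IsGoodKernel K) : Integrable K := by
  by_contra h
  have h1 := hK.integral_one
  rw [integral_undef h] at h1; norm_num at h1

lemma SAF_K_continuous (hK : IsGoodKernel K) : Continuous K :=
  hK.lipschitz.choose_spec.continuous

lemma SAF_sk_cont (hK : IsGoodKernel K) : Continuous (scaledKernel K δ) :=
  continuous_const.mul ((SAF_K_continuous hK).comp (continuous_id.div_const δ))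

lemma SAF_sk_int (hδ : 0 < δ) (hK : IsGoodKernel K) : Integrable (scaledKernel K δ) :=
  ((SAF_K_integrable hK).comp_div hδ.ne').const_mul _

lemma SAF_sk_nn (hδ : 0 < δ) (hK : IsGoodKernel K) (x : ℝ) : 0 ≤ scaledKernel K δ x :=
  mul_nonneg (by positivity) (hK.nonneg _)

lemma SAF_sk_one (hδ : 0 < δ) (hK : IsGoodKernel K) : (∫ x, scaledKernel K δ x) = 1 := by
  unfold scaledKernel
  rw [integral_const_mul, Measure.integral_comp_div K δ, hK.integral_one, abs_of_pos hδ]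
  simp [hδ.ne']

lemma SAF_sk_mul_int (hδ : 0 < δ) (hK : IsGoodKernel K) :
    Integrable (fun z => z * scaledKernel K δ z) := by
  have h : (fun z => z * scaledKernel K δ z) = fun z => (z / δ) * K (z / δ) := by
    ext z; unfold scaledKernel; field_simp
  rw [h]
  exact hK.bar_integrable.comp_div hδ.ne'

lemma SAF_abs_mul_sk_int (hδ : 0 < δ) (hK : IsGoodKernel K) (x : ℝ) :
    Integrable (fun z => |x - z| * scaledKernel K δ z) := by
  refine Integrable.mono' (((SAF_sk_int hδ hK).const_mul |x|).add (SAF_sk_mul_int hδ hK).abs)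
    ((continuous_const.sub continuous_id).abs.mul (SAF_sk_cont hK)).aestronglyMeasurable
    (Filter.Eventually.of_forall fun z => ?_)
  have h1 : 0 ≤ scaledKernel K δ z := SAF_sk_nn hδ hK z
  have h2 : |x - z| ≤ |x| + |z| := abs_sub x z
  rw [Real.norm_eq_abs, abs_of_nonneg (mul_nonneg (abs_nonneg _) h1)]
  calc |x - z| * scaledKernel K δ z ≤ (|x| + |z|) * scaledKernel K δ z :=
        mul_le_mul_of_nonneg_right h2 h1
    _ = |x| * scaledKernel K δ z + |z * scaledKernel K δ z| := by
        rw [add_mul, abs_mul, abs_of_nonneg h1]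

lemma SAF_sl_eq (x : ℝ) : smoothedLoss K δ x = ∫ z, |x - z| * scaledKernel K δ z := by
  unfold smoothedLoss
  rw [← integral_sub_left_eq_self (fun z => |x - z| * scaledKernel K δ z) volume x]
  simp

lemma SAF_sl_hasDerivAt (hδ : 0 < δ) (hK : IsGoodKernel K) (x₀ : ℝ) :
    HasDerivAt (smoothedLoss K δ)
      (2 * (∫ z in Iic x₀, scaledKernel K δ z) - 1) x₀ := by
  have hski := SAF_sk_int hδ hK
  have hskc := SAF_sk_cont (δ := δ) hK
  have hsk1 := SAF_sk_one hδ hK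
  have hfe : smoothedLoss K δ = fun x => ∫ z, |x - z| * scaledKernel K δ z :=
    funext SAF_sl_eq
  rw [hfe]
  have hae : ∀ᵐ z : ℝ, z ≠ x₀ := by
    have h0 : (volume : Measure ℝ) {x₀} = 0 := measure_singleton x₀
    rw [ae_iff]; simpa using h0
  have key := hasDerivAt_integral_of_dominated_loc_of_lip (μ := volume) (𝕜 := ℝ)
    (F := fun x z => |x - z| * scaledKernel K δ z)
    (F' := fun z => (if z < x₀ then 1 else -1) * scaledKernel K δ z)
    (x₀ := x₀) (bound := fun z => scaledKernel K δ z) (s := Metric.ball x₀ 1) (Metric.ball_mem_nhds x₀ one_pos)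
    (Filter.Eventually.of_forall fun x =>
      (((continuous_const.sub continuous_id).abs.mul hskc)).aestronglyMeasurable)
    (SAF_abs_mul_sk_int hδ hK x₀)
    ((((measurable_const.ite measurableSet_Iio measurable_const).mul
      hskc.measurable)).aestronglyMeasurable)
    (Filter.Eventually.of_forall fun z => ?_)
    hski
    (hae.mono fun z hz => ?_)
  · have heq : (fun z => (if z < x₀ then (1:ℝ) else -1) * scaledKernel K δ z)
        = fun z => 2 * (Set.indicator (Iio x₀) (scaledKernel K δ) z) - scaledKernel K δ z := by
      funext z
      by_cases h : z < x₀ <;> simp [Set.indicator, h]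
      ring
    rw [heq] at key
    have h2 := key.2
    rw [integral_sub ((hski.indicator measurableSet_Iio).const_mul 2) hski,
      integral_const_mul, integral_indicator measurableSet_Iio, hsk1,
      ← integral_Iic_eq_integral_Iio] at h2
    exact h2
  · show LipschitzOnWith (Real.nnabs (scaledKernel K δ z))
      (fun x => |x - z| * scaledKernel K δ z) (Metric.ball x₀ 1)
    refine LipschitzWith.lipschitzOnWith ?_
    refine LipschitzWith.of_dist_le_mul fun a b => ?_
    have hc : (Real.nnabs (scaledKernel K δ z) : ℝ) = |scaledKernel K δ z| :=
      Real.coe_nnabs _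
    rw [Real.dist_eq, Real.dist_eq, hc, ← sub_mul, abs_mul]
    have h2 : abs (|a - z| - |b - z|) ≤ |a - b| := by
      have h3 := abs_abs_sub_abs_le_abs_sub (a - z) (b - z)
      rwa [sub_sub_sub_cancel_right] at h3
    rw [mul_comm]
    exact mul_le_mul_of_nonneg_left h2 (abs_nonneg _)
  · show HasDerivAt (fun x => |x - z| * scaledKernel K δ z)
      ((if z < x₀ then (1:ℝ) else -1) * scaledKernel K δ z) x₀
    rcases lt_or_gt_of_ne hz with h | h
    · have h1 : HasDerivAt (fun x => |x - z|) 1 x₀ := by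
        have hd : HasDerivAt (fun x : ℝ => x - z) 1 x₀ := (hasDerivAt_id x₀).sub_const z
        refine hd.congr_of_eventuallyEq ?_
        filter_upwards [Ioi_mem_nhds h] with x hx
        rw [abs_of_pos (sub_pos.2 hx)]
      rw [if_pos h]
      simpa using h1.mul_const (scaledKernel K δ z)
    · have h1 : HasDerivAt (fun x => |x - z|) (-1) x₀ := by
        have hd : HasDerivAt (fun x : ℝ => -(x - z)) (-1) x₀ :=
          ((hasDerivAt_id x₀).sub_const z).neg
        refine hd.congr_of_eventuallyEq ?_
        filter_upwards [Iio_mem_nhds h] with x hx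
        rw [abs_of_neg (sub_neg.2 hx)]
      rw [if_neg (not_lt.2 h.le)]
      simpa using h1.mul_const (scaledKernel K δ z)

lemma SAF_sl'_hasDerivAt (hδ : 0 < δ) (hK : IsGoodKernel K) (x : ℝ) :
    HasDerivAt (fun u => 2 * (∫ z in Iic u, scaledKernel K δ z) - 1)
      (2 * scaledKernel K δ x) x := by
  have hski := SAF_sk_int hδ hK
  have hskc := SAF_sk_cont (δ := δ) hK
  have hIic : ∀ u : ℝ, (∫ z in Iic u, scaledKernel K δ z)
      = (∫ z in Iic (0:ℝ), scaledKernel K δ z) + ∫ t in (0:ℝ)..u, scaledKernel K δ t := by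
    intro u
    have h := intervalIntegral.integral_Iic_sub_Iic (hski.integrableOn)
      (hski.integrableOn) (a := 0) (b := u)
    linarith
  have hftc : HasDerivAt (fun u => ∫ t in (0:ℝ)..u, scaledKernel K δ t)
      (scaledKernel K δ x) x :=
    intervalIntegral.integral_hasDerivAt_right (hski.intervalIntegrable)
      (hskc.stronglyMeasurableAtFilter _ _) hskc.continuousAt
  have h2 : HasDerivAt (fun u => 2 * ((∫ z in Iic (0:ℝ), scaledKernel K δ z)
      + ∫ t in (0:ℝ)..u, scaledKernel K δ t) - 1) (2 * scaledKernel K δ x) x := by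
    simpa using (((hftc.const_add _).const_mul 2).sub_const 1)
  refine h2.congr_of_eventuallyEq (Filter.Eventually.of_forall fun u => ?_)
  simp only []; rw [hIic u]

lemma SAF_sl_contDiff (hδ : 0 < δ) (hK : IsGoodKernel K) :
    ContDiff ℝ 2 (smoothedLoss K δ) := by
  have hf := SAF_sl_hasDerivAt hδ hK
  have hf' := SAF_sl'_hasDerivAt hδ hK
  have hg : Continuous (fun x => 2 * scaledKernel K δ x) :=
    continuous_const.mul (SAF_sk_cont hK)
  rw [show (2 : WithTop ℕ∞) = 1 + 1 from rfl, contDiff_succ_iff_deriv]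
  refine ⟨fun x => (hf x).differentiableAt, by simp, ?_⟩
  have hd : deriv (smoothedLoss K δ) = fun u => 2 * (∫ z in Iic u, scaledKernel K δ z) - 1 :=
    funext fun x => (hf x).deriv
  rw [hd, contDiff_one_iff_deriv]
  exact ⟨fun x => (hf' x).differentiableAt,
    (funext fun x => (hf' x).deriv :
      deriv (fun u => 2 * (∫ z in Iic u, scaledKernel K δ z) - 1)
        = fun x => 2 * scaledKernel K δ x) ▸ hg⟩

lemma SAF_obj_contDiff {p n : ℕ} (hδ : 0 < δ) (hK : IsGoodKernel K)
    (a : Fin n → EuclideanSpace ℝ (Fin p)) (b : Fin n → ℝ) :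
    ContDiff ℝ 2 (smoothedObj K δ a b) := by
  unfold smoothedObj
  refine contDiff_const.mul (ContDiff.sum fun i _ => ?_)
  exact (SAF_sl_contDiff hδ hK).comp
    (((innerSL ℝ (a i)).contDiff.pow 2).sub contDiff_const)

lemma SAF_obj_symm {p n : ℕ} (xs : EuclideanSpace ℝ (Fin p))
    (a : Fin n → EuclideanSpace ℝ (Fin p)) (b : Fin n → ℝ) :
    smoothedObj K δ a b (-xs) = smoothedObj K δ a b xs := by
  unfold smoothedObj
  congr 1
  refine Finset.sum_congr rfl fun i _ => ?_
  rw [inner_neg_right, neg_pow, pow_two, pow_two]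
  norm_num

lemma SAF_grad_inner {p : ℕ} (f : EuclideanSpace ℝ (Fin p) → ℝ)
    (x v : EuclideanSpace ℝ (Fin p)) :
    ⟪∇ f x, v⟫ = fderiv ℝ f x v :=
  InnerProductSpace.toDual_symm_apply

lemma SAF_norm_fderiv_fderiv_le {p : ℕ} {f : EuclideanSpace ℝ (Fin p) → ℝ}
    (x : EuclideanSpace ℝ (Fin p)) :
    ‖fderiv ℝ (fderiv ℝ f) x‖ ≤ ‖iteratedFDeriv ℝ 2 f x‖ := by
  refine ContinuousLinearMap.opNorm_le_bound _ (norm_nonneg _) fun u => ?_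
  refine ContinuousLinearMap.opNorm_le_bound _
    (mul_nonneg (norm_nonneg _) (norm_nonneg _)) fun v => ?_
  have h := (iteratedFDeriv ℝ 2 f x).le_opNorm ![u, v]
  rw [iteratedFDeriv_two_apply] at h
  simp only [Matrix.cons_val_zero, Matrix.cons_val_one, Matrix.head_cons,
    Fin.prod_univ_two] at h
  calc ‖fderiv ℝ (fderiv ℝ f) x u v‖ ≤ ‖iteratedFDeriv ℝ 2 f x‖ * (‖u‖ * ‖v‖) := h
    _ = ‖iteratedFDeriv ℝ 2 f x‖ * ‖u‖ * ‖v‖ := by ring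

lemma SAF_grad_lip {p : ℕ} {f : EuclideanSpace ℝ (Fin p) → ℝ}
    (hf : ContDiff ℝ 2 f) {L : ℝ} (hL : 0 ≤ L)
    (hb : ∀ x, ‖iteratedFDeriv ℝ 2 f x‖ ≤ L) (x y : EuclideanSpace ℝ (Fin p)) :
    ‖∇ f x - ∇ f y‖ ≤ L * ‖x - y‖ := by
  have hd1 : Differentiable ℝ (fderiv ℝ f) :=
    (hf.fderiv_right (m := 1) (by norm_num)).differentiable (by norm_num)
  have hlip : LipschitzWith L.toNNReal (fderiv ℝ f) := by
    refine lipschitzWith_of_nnnorm_fderiv_le hd1 fun z => ?_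
    rw [← NNReal.coe_le_coe]
    simpa [Real.coe_toNNReal _ hL] using (SAF_norm_fderiv_fderiv_le z).trans (hb z)
  have h2 := hlip.dist_le_mul x y
  rw [dist_eq_norm, dist_eq_norm] at h2
  calc ‖∇ f x - ∇ f y‖ = ‖fderiv ℝ f x - fderiv ℝ f y‖ := by
        rw [gradient, gradient, ← LinearIsometryEquiv.map_sub, LinearIsometryEquiv.norm_map]
    _ ≤ L * ‖x - y‖ := by simpa [Real.coe_toNNReal _ hL] using h2

lemma SAF_descent {p : ℕ} {f : EuclideanSpace ℝ (Fin p) → ℝ} (hf : ContDiff ℝ 2 f) {L : ℝ}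
    (hlip : ∀ x y, ‖∇ f x - ∇ f y‖ ≤ L * ‖x - y‖) (x v : EuclideanSpace ℝ (Fin p)) :
    f (x + v) ≤ f x + ⟪∇ f x, v⟫ + L / 2 * ‖v‖ ^ 2 := by
  set c : ℝ → EuclideanSpace ℝ (Fin p) := fun t => x + t • v with hc
  have hcd : ∀ t : ℝ, HasDerivAt c v t := fun t => by
    rw [hc]; simpa using ((hasDerivAt_id t).smul_const v).const_add x
  set g : ℝ → ℝ := fun t => fderiv ℝ f (c t) v with hg
  have hdf : Differentiable ℝ f := hf.differentiable (by norm_num)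
  have hphi : ∀ t : ℝ, HasDerivAt (fun s => f (c s)) (g t) t := fun t =>
    ((hdf (c t)).hasFDerivAt).comp_hasDerivAt t (hcd t)
  have hgc : Continuous g := by
    have h1 : Continuous (fun t => fderiv ℝ f (c t)) :=
      (hf.continuous_fderiv (by norm_num)).comp (by continuity)
    exact (ContinuousLinearMap.apply ℝ ℝ v).continuous.comp h1
  have hint : ∫ t in (0:ℝ)..1, g t = f (c 1) - f (c 0) :=
    intervalIntegral.integral_eq_sub_of_hasDerivAt (fun t _ => hphi t)
      (hgc.intervalIntegrable 0 1)
  have hbound : ∀ t ∈ Icc (0:ℝ) 1, g t ≤ g 0 + (L * ‖v‖ ^ 2) * t := by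
    intro t ht
    have h1 : g t - g 0 = ⟪∇ f (c t) - ∇ f (c 0), v⟫ := by
      rw [inner_sub_left, SAF_grad_inner, SAF_grad_inner, hg]
    have h2 : ⟪∇ f (c t) - ∇ f (c 0), v⟫ ≤ ‖∇ f (c t) - ∇ f (c 0)‖ * ‖v‖ :=
      real_inner_le_norm _ _
    have h3 : ‖∇ f (c t) - ∇ f (c 0)‖ ≤ L * (t * ‖v‖) := by
      have h4 := hlip (c t) (c 0)
      have hcc : c t - c 0 = t • v := by simp [hc]
      rw [hcc] at h4
      simpa [norm_smul, abs_of_nonneg ht.1] using h4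
    nlinarith [norm_nonneg v]
  have hrhs : ∫ t in (0:ℝ)..1, (g 0 + (L * ‖v‖ ^ 2) * t)
      = g 0 + L / 2 * ‖v‖ ^ 2 := by
    rw [intervalIntegral.integral_add (intervalIntegrable_const)
      ((intervalIntegral.intervalIntegrable_id).const_mul _),
      intervalIntegral.integral_const, intervalIntegral.integral_const_mul,
      integral_id]
    norm_num
    ring
  have hmono : ∫ t in (0:ℝ)..1, g t ≤ ∫ t in (0:ℝ)..1, (g 0 + (L * ‖v‖ ^ 2) * t) := by
    refine intervalIntegral.integral_mono_on (by norm_num) (hgc.intervalIntegrable 0 1)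
      ((intervalIntegrable_const).add
        ((intervalIntegral.intervalIntegrable_id).const_mul _)) hbound
  have hc0 : c 0 = x := by simp [hc]
  have hc1 : c 1 = x + v := by simp [hc]
  have hg0 : g 0 = ⟪∇ f x, v⟫ := by
    rw [SAF_grad_inner]
    show fderiv ℝ f (c 0) v = fderiv ℝ f x v
    rw [hc0]
  rw [hint, hrhs, hc0, hc1, hg0] at hmono
  linarith [hmono]

lemma SAF_distSig_exists {p : ℕ} (xs z : EuclideanSpace ℝ (Fin p)) :
    ∃ y : EuclideanSpace ℝ (Fin p), (y = xs ∨ y = -xs) ∧ ‖z - y‖ = distSig xs z := by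
  unfold distSig
  rcases le_total ‖z - xs‖ ‖z + xs‖ with h | h
  · exact ⟨xs, Or.inl rfl, (min_eq_left h).symm⟩
  · exact ⟨-xs, Or.inr rfl, by rw [sub_neg_eq_add]; exact (min_eq_right h).symm⟩

set_option maxHeartbeats 1000000 in
lemma SAF_main {p : ℕ} (F : EuclideanSpace ℝ (Fin p) → ℝ)
    (xs : EuclideanSpace ℝ (Fin p)) (δ lams ρ μmax : ℝ)
    (hδ : 0 < δ) (hlams : 0 < lams) (hρ : 0 < ρ) (hμmax : 0 < μmax)
    (hFsym : F (-xs) = F xs)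
    (hsharp : ∀ x, lams * min (distSig xs x) ((distSig xs x) ^ 2 / δ) ≤ F x - F xs)
    (hweak : ∀ x y, ⟪∇ F x, y - x⟫ - ρ / 2 * ‖y - x‖ ^ 2 ≤ F y - F x)
    (hdesc : ∀ x v, F (x + v) ≤ F x + ⟪∇ F x, v⟫ + (μmax / δ) / 2 * ‖v‖ ^ 2)
    (x : ℕ → EuclideanSpace ℝ (Fin p))
    (hiter : ∀ k, x (k + 1) = x k - (δ / μmax) • ∇ F (x k))
    (hinit : distSig xs (x 0) ≤ min 1 (Real.sqrt (2 * lams / μmax)) * δ)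
    (hδle : δ ≤ lams / ρ) :
    ∀ k, F (x (k + 1)) - F xs ≤ (1 - lams / (8 * μmax)) * (F (x k) - F xs) := by
  have hΔnn : ∀ z, 0 ≤ distSig xs z := fun z => le_min (norm_nonneg _) (norm_nonneg _)
  have hge : ∀ z, 0 ≤ F z - F xs := fun z =>
    le_trans (mul_nonneg hlams.le (le_min (hΔnn z) (by positivity))) (hsharp z)
  -- descent step, denominator-free form
  have hstep : ∀ y, 2 * μmax * F (y - (δ / μmax) • ∇ F y)
      ≤ 2 * μmax * F y - δ * ‖∇ F y‖ ^ 2 := by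
    intro y
    have h := hdesc y (-((δ / μmax) • ∇ F y))
    have e1 : ⟪∇ F y, -((δ / μmax) • ∇ F y)⟫ = -((δ / μmax) * ‖∇ F y‖ ^ 2) := by
      rw [inner_neg_right, real_inner_smul_right, real_inner_self_eq_norm_sq]
    have e2 : ‖-((δ / μmax) • ∇ F y)‖ ^ 2 = (δ / μmax) ^ 2 * ‖∇ F y‖ ^ 2 := by
      rw [norm_neg, norm_smul, Real.norm_eq_abs,
        abs_of_nonneg (by positivity : (0:ℝ) ≤ δ / μmax), mul_pow]
    rw [e1, e2, ← sub_eq_add_neg] at h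
    have e3 : F y + -((δ / μmax) * ‖∇ F y‖ ^ 2)
        + (μmax / δ) / 2 * ((δ / μmax) ^ 2 * ‖∇ F y‖ ^ 2)
        = F y - δ / (2 * μmax) * ‖∇ F y‖ ^ 2 := by
      field_simp; ring
    rw [e3] at h
    calc 2 * μmax * F (y - (δ / μmax) • ∇ F y)
        ≤ 2 * μmax * (F y - δ / (2 * μmax) * ‖∇ F y‖ ^ 2) :=
          mul_le_mul_of_nonneg_left h (by positivity)
      _ = 2 * μmax * F y - δ * ‖∇ F y‖ ^ 2 := by field_simp
  -- critical points
  have hcrit : ∀ y, F y = F xs → ∇ F y = 0 := by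
    intro y hy
    have h1 := hstep y
    have h2 := hge (y - (δ / μmax) • ∇ F y)
    have h2' : 0 ≤ 2 * μmax * (F (y - (δ / μmax) • ∇ F y) - F xs) :=
      mul_nonneg (by positivity) h2
    have hy' : 2 * μmax * F y = 2 * μmax * F xs := by rw [hy]
    have h3 : δ * ‖∇ F y‖ ^ 2 ≤ 0 := by nlinarith [h1, h2', hy']
    have h3' : ‖∇ F y‖ ^ 2 ≤ 0 := by nlinarith [hδ, sq_nonneg ‖∇ F y‖]
    have h4 : ‖∇ F y‖ ^ 2 = 0 := le_antisymm h3' (sq_nonneg _)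
    have h5 : ‖∇ F y‖ = 0 := by
      exact pow_eq_zero_iff (n := 2) (by norm_num) |>.mp h4
    exact norm_eq_zero.mp h5
  have hgxs : ∇ F xs = 0 := hcrit xs rfl
  have hgnxs : ∇ F (-xs) = 0 := hcrit (-xs) hFsym
  -- quadratic upper bound
  have hquad : ∀ z, F z - F xs ≤ (μmax / δ) / 2 * (distSig xs z) ^ 2 := by
    intro z
    obtain ⟨y, hy, hny⟩ := SAF_distSig_exists xs z
    have h0 : ∇ F y = 0 ∧ F y = F xs := by
      rcases hy with rfl | rfl
      · exact ⟨hgxs, rfl⟩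
      · exact ⟨hgnxs, hFsym⟩
    have h := hdesc y (z - y)
    rw [show y + (z - y) = z from by abel, h0.1] at h
    simp only [inner_zero_left] at h
    rw [hny] at h
    linarith [h, h0.2]
  -- initial gap bound
  have hG0 : F (x 0) - F xs ≤ lams * δ := by
    have h1 := hquad (x 0)
    have hmnn : 0 ≤ min 1 (Real.sqrt (2 * lams / μmax)) :=
      le_min zero_le_one (Real.sqrt_nonneg _)
    have hs2 : (min 1 (Real.sqrt (2 * lams / μmax))) ^ 2 ≤ 2 * lams / μmax := by
      have hle := min_le_right 1 (Real.sqrt (2 * lams / μmax))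
      nlinarith [Real.sq_sqrt (show (0:ℝ) ≤ 2 * lams / μmax by positivity),
        Real.sqrt_nonneg (2 * lams / μmax)]
    have h2 : distSig xs (x 0) ^ 2 ≤ (2 * lams / μmax) * δ ^ 2 := by
      have h3 : distSig xs (x 0) ^ 2 ≤ (min 1 (Real.sqrt (2 * lams / μmax)) * δ) ^ 2 :=
        pow_le_pow_left₀ (hΔnn _) hinit 2
      calc distSig xs (x 0) ^ 2 ≤ (min 1 (Real.sqrt (2 * lams / μmax)) * δ) ^ 2 := h3
        _ = (min 1 (Real.sqrt (2 * lams / μmax))) ^ 2 * δ ^ 2 := by ring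
        _ ≤ (2 * lams / μmax) * δ ^ 2 :=
            mul_le_mul_of_nonneg_right hs2 (by positivity)
    calc F (x 0) - F xs ≤ (μmax / δ) / 2 * (distSig xs (x 0)) ^ 2 := h1
      _ ≤ (μmax / δ) / 2 * ((2 * lams / μmax) * δ ^ 2) :=
          mul_le_mul_of_nonneg_left h2 (by positivity)
      _ = lams * δ := by field_simp
  -- key contraction step
  have hkey : ∀ k, F (x k) - F xs ≤ lams * δ →
      F (x (k + 1)) - F xs ≤ (1 - lams / (8 * μmax)) * (F (x k) - F xs) := by
    intro k hk
    have hGnn : 0 ≤ F (x k) - F xs := hge _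
    have hstepk : 2 * μmax * F (x (k + 1))
        ≤ 2 * μmax * F (x k) - δ * ‖∇ F (x k)‖ ^ 2 := by
      rw [hiter k]; exact hstep (x k)
    -- Δ² bound
    have hΔ2 : lams * (distSig xs (x k)) ^ 2 ≤ δ * (F (x k) - F xs) := by
      have h1 := hsharp (x k)
      rcases min_cases (distSig xs (x k)) ((distSig xs (x k)) ^ 2 / δ) with
        ⟨heq, hle⟩ | ⟨heq, hlt⟩
      · rw [heq] at h1
        have hΔδ : distSig xs (x k) ≤ δ := by nlinarith [hk, hΔnn (x k)]
        nlinarith [hΔnn (x k), hGnn]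
      · rw [heq] at h1
        have h2 := mul_le_mul_of_nonneg_right h1 hδ.le
        have h2' : lams * (distSig xs (x k) ^ 2 / δ) * δ
            = lams * distSig xs (x k) ^ 2 := by field_simp
        rw [h2'] at h2
        linarith
    -- gradient lower bound
    obtain ⟨y, hy, hny⟩ := SAF_distSig_exists xs (x k)
    have hFy : F y = F xs := by
      rcases hy with rfl | rfl
      · rfl
      · exact hFsym
    have hw := hweak (x k) y
    have hinner : ⟪∇ F (x k), x k - y⟫ ≤ ‖∇ F (x k)‖ * distSig xs (x k) := by
      calc ⟪∇ F (x k), x k - y⟫ ≤ ‖∇ F (x k)‖ * ‖x k - y‖ := real_inner_le_norm _ _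
        _ = ‖∇ F (x k)‖ * distSig xs (x k) := by rw [hny]
    have hyx : ‖y - x k‖ = distSig xs (x k) := by rw [norm_sub_rev, hny]
    have hinner2 : ⟪∇ F (x k), y - x k⟫ = -⟪∇ F (x k), x k - y⟫ := by
      rw [← inner_neg_right, neg_sub]
    rw [hinner2, hyx, hFy] at hw
    have hρδ : δ * ρ ≤ lams := (le_div_iff₀ hρ).mp hδle
    have hhalf : ρ / 2 * (distSig xs (x k)) ^ 2 ≤ (F (x k) - F xs) / 2 := by
      have hs1 : ρ * (lams * (distSig xs (x k)) ^ 2) ≤ ρ * (δ * (F (x k) - F xs)) :=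
        mul_le_mul_of_nonneg_left hΔ2 hρ.le
      have hs2 : (δ * ρ) * (F (x k) - F xs) ≤ lams * (F (x k) - F xs) :=
        mul_le_mul_of_nonneg_right hρδ hGnn
      have hs3 : lams * (ρ * (distSig xs (x k)) ^ 2) ≤ lams * (F (x k) - F xs) := by
        nlinarith [hs1, hs2]
      have hs4 : ρ * (distSig xs (x k)) ^ 2 ≤ F (x k) - F xs :=
        le_of_mul_le_mul_left hs3 hlams
      linarith
    have hgΔ : (F (x k) - F xs) / 2 ≤ ‖∇ F (x k)‖ * distSig xs (x k) := by
      linarith [hinner, hw, hhalf]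
    by_cases hGpos : F (x k) - F xs ≤ 0
    · have hGeq : F (x k) - F xs = 0 := le_antisymm hGpos hGnn
      rw [hGeq, mul_zero]
      have h5 := hge (x (k + 1))
      nlinarith [hstepk, sq_nonneg ‖∇ F (x k)‖, hδ, hμmax]
    · push_neg at hGpos
      have h1 : (F (x k) - F xs) ^ 2 / 4
          ≤ ‖∇ F (x k)‖ ^ 2 * (distSig xs (x k)) ^ 2 := by
        nlinarith [hgΔ, norm_nonneg (∇ F (x k)), hΔnn (x k), hGpos]
      have h2a := mul_le_mul_of_nonneg_left h1 hlams.le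
      have h2b := mul_le_mul_of_nonneg_left hΔ2 (sq_nonneg ‖∇ F (x k)‖)
      have h2 : lams * ((F (x k) - F xs) ^ 2 / 4)
          ≤ ‖∇ F (x k)‖ ^ 2 * (δ * (F (x k) - F xs)) := by nlinarith [h2a, h2b]
      have h3 : lams * (F (x k) - F xs) / 4 ≤ ‖∇ F (x k)‖ ^ 2 * δ := by
        have h2' : (lams * (F (x k) - F xs) / 4) * (F (x k) - F xs)
            ≤ (‖∇ F (x k)‖ ^ 2 * δ) * (F (x k) - F xs) := by nlinarith [h2]
        exact le_of_mul_le_mul_right h2' hGpos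
      have h8 : (0:ℝ) < 8 * μmax := by positivity
      rw [show (1 - lams / (8 * μmax)) * (F (x k) - F xs)
          = (8 * μmax * (F (x k) - F xs) - lams * (F (x k) - F xs)) / (8 * μmax) from by
            field_simp]
      rw [le_div_iff₀ h8]
      nlinarith [hstepk, h3]
  -- invariant by induction
  have hinv : ∀ k, F (x k) - F xs ≤ lams * δ := by
    intro k
    induction k with
    | zero => exact hG0
    | succ m ih =>
      have h1 := hkey m ih
      have hGnn : 0 ≤ F (x m) - F xs := hge _
      have h2 : (1 - lams / (8 * μmax)) * (F (x m) - F xs) ≤ F (x m) - F xs := by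
        nlinarith [hGnn, hlams.le, hμmax, div_nonneg hlams.le (by positivity : (0:ℝ) ≤ 8 * μmax)]
      linarith [h1, h2, ih]
  intro k
  exact hkey k (hinv k)

end SAFAux

/-- Local linear convergence of gradient descent. Assuming generalized
sharpness, weak convexity, and the uniform Hessian bound `μmax/δ`, gradient descent with
step size `t = δ/μmax` started with `Δ(x₀) ≤ min{1, √(2λ_s/μmax)} δ` (and `δ ≤ λ_s/ρ`)
contracts the objective gap by the factor `1 - λ_s/(8 μmax)` at every iteration. -/
theorem gradient_descent_local_linear_convergence
    {p n : ℕ} (xs : EuclideanSpace ℝ (Fin p))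
    (K : ℝ → ℝ) (hK : IsGoodKernel K) (δ : ℝ) (hδ : 0 < δ)
    (a : Fin n → EuclideanSpace ℝ (Fin p)) (b : Fin n → ℝ)
    (hb : ∀ i, b i = (⟪a i, xs⟫) ^ 2)
    (lams ρ μmax : ℝ) (hlams : 0 < lams) (hρ : 0 < ρ) (hμmax : 0 < μmax)
    (hsharp : ∀ x : EuclideanSpace ℝ (Fin p),
      lams * min (distSig xs x) ((distSig xs x) ^ 2 / δ) ≤
        smoothedObj K δ a b x - smoothedObj K δ a b xs)
    (hweak : ∀ x y : EuclideanSpace ℝ (Fin p),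
      ⟪∇ (smoothedObj K δ a b) x, y - x⟫ - ρ / 2 * ‖y - x‖ ^ 2 ≤
        smoothedObj K δ a b y - smoothedObj K δ a b x)
    (hhess : ∀ x : EuclideanSpace ℝ (Fin p),
      ‖iteratedFDeriv ℝ 2 (smoothedObj K δ a b) x‖ ≤ μmax / δ)
    (x : ℕ → EuclideanSpace ℝ (Fin p))
    (hiter : ∀ k : ℕ, x (k + 1) = x k - (δ / μmax) • ∇ (smoothedObj K δ a b) (x k))
    (hinit : distSig xs (x 0) ≤ min 1 (Real.sqrt (2 * lams / μmax)) * δ)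
    (hδle : δ ≤ lams / ρ) :
    ∀ k : ℕ,
      smoothedObj K δ a b (x (k + 1)) - smoothedObj K δ a b xs ≤
        (1 - lams / (8 * μmax)) *
          (smoothedObj K δ a b (x k) - smoothedObj K δ a b xs) := by
  have hF2 : ContDiff ℝ 2 (smoothedObj K δ a b) := SAF_obj_contDiff hδ hK a b
  have hL : 0 < μmax / δ := div_pos hμmax hδ
  have hlip : ∀ u v : EuclideanSpace ℝ (Fin p),
      ‖∇ (smoothedObj K δ a b) u - ∇ (smoothedObj K δ a b) v‖ ≤ (μmax / δ) * ‖u - v‖ :=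
    SAF_grad_lip hF2 hL.le hhess
  have hdesc : ∀ u v : EuclideanSpace ℝ (Fin p),
      smoothedObj K δ a b (u + v) ≤ smoothedObj K δ a b u
        + ⟪∇ (smoothedObj K δ a b) u, v⟫ + (μmax / δ) / 2 * ‖v‖ ^ 2 :=
    SAF_descent hF2 hlip
  have hFsym : smoothedObj K δ a b (-xs) = smoothedObj K δ a b xs :=
    SAF_obj_symm xs a b
  exact SAF_main (smoothedObj K δ a b) xs δ lams ρ μmax hδ hlams hρ hμmax hFsym
    hsharp hweak hdesc x hiter hinit hδle
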